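/- arXiv:2604.02601 — 2 statements merged into one kernel-verified Lean document; each statement's English description precedes it below -/
import Mathlib

section
/- For all z ≠ 0, the function V(z) = (1 - u(z))² + (1/2)u(z)², where u(z) = (sinh z - z)/(z(cosh z - 1)), satisfies 1/2 ≤ V(z) ≤ 1. -/
open Real Set

lemma nonneg_of_deriv_aux (f : ℝ → ℝ) (hf : Differentiable ℝ f) (h0 : f 0 = 0)
    (hd : ∀ x ∈ interior (Ici (0:ℝ)), 0 ≤ deriv f x) : ∀ x, 0 ≤ x → 0 ≤ f x := by
  intro x hx
  have hmono : MonotoneOn f (Ici (0:ℝ)) :=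
    monotoneOn_of_deriv_nonneg (convex_Ici 0) hf.continuous.continuousOn
      (fun y _ => (hf y).differentiableWithinAt) hd
  have := hmono (self_mem_Ici) (mem_Ici.mpr hx) hx
  linarith [this, h0.symm ▸ this]

lemma key_ineq (z : ℝ) (hz : 0 ≤ z) :
    0 ≤ z * Real.cosh z + 2 * z - 3 * Real.sinh z := by
  -- h(z) = z cosh z - sinh z ≥ 0
  have h2 : ∀ x, 0 ≤ x → 0 ≤ x * Real.cosh x - Real.sinh x := by
    apply nonneg_of_deriv_aux
    · fun_prop
    · simp
    · intro x hx
      simp only [interior_Ici, mem_Ioi] at hx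
      have hD : HasDerivAt (fun x => x * Real.cosh x - Real.sinh x) (x * Real.sinh x) x := by
        have := ((hasDerivAt_id x).mul (Real.hasDerivAt_cosh x)).sub (Real.hasDerivAt_sinh x)
        refine this.congr_deriv ?_; simp only [id_eq]; ring
      rw [hD.deriv]
      exact mul_nonneg hx.le (Real.sinh_nonneg_iff.mpr hx.le)
  -- g(z) = z sinh z - 2 cosh z + 2 ≥ 0
  have h1 : ∀ x, 0 ≤ x → 0 ≤ x * Real.sinh x - 2 * Real.cosh x + 2 := by
    apply nonneg_of_deriv_aux
    · fun_prop
    · simp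
    · intro x hx
      simp only [interior_Ici, mem_Ioi] at hx
      have hD : HasDerivAt (fun x => x * Real.sinh x - 2 * Real.cosh x + 2)
          (x * Real.cosh x - Real.sinh x) x := by
        have := (((hasDerivAt_id x).mul (Real.hasDerivAt_sinh x)).sub
          ((Real.hasDerivAt_cosh x).const_mul 2)).add_const 2
        refine this.congr_deriv ?_; simp only [id_eq]; ring
      rw [hD.deriv]
      exact h2 x hx.le
  -- f(z) = z cosh z + 2z - 3 sinh z ≥ 0
  have h0 : ∀ x, 0 ≤ x → 0 ≤ x * Real.cosh x + 2 * x - 3 * Real.sinh x := by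
    apply nonneg_of_deriv_aux
    · fun_prop
    · simp
    · intro x hx
      simp only [interior_Ici, mem_Ioi] at hx
      have hD : HasDerivAt (fun x => x * Real.cosh x + 2 * x - 3 * Real.sinh x)
          (x * Real.sinh x - 2 * Real.cosh x + 2) x := by
        have := (((hasDerivAt_id x).mul (Real.hasDerivAt_cosh x)).add
          ((hasDerivAt_id x).const_mul 2)).sub ((Real.hasDerivAt_sinh x).const_mul 3)
        refine this.congr_deriv ?_; simp only [id_eq]; ring
      rw [hD.deriv]
      exact h1 x hx.le
  exact h0 z hz

lemma u_bounds (z : ℝ) (hz : z ≠ 0) :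
    0 ≤ (Real.sinh z - z) / (z * (Real.cosh z - 1)) ∧
    (Real.sinh z - z) / (z * (Real.cosh z - 1)) ≤ 1 / 3 := by
  -- reduce to z > 0 using evenness
  have main : ∀ w : ℝ, 0 < w → 0 ≤ (Real.sinh w - w) / (w * (Real.cosh w - 1)) ∧
      (Real.sinh w - w) / (w * (Real.cosh w - 1)) ≤ 1 / 3 := by
    intro w hw
    have hc : 1 < Real.cosh w := Real.one_lt_cosh.mpr hw.ne'
    have hden : 0 < w * (Real.cosh w - 1) := mul_pos hw (by linarith)
    have hs : w < Real.sinh w := Real.self_lt_sinh_iff.mpr hw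
    constructor
    · exact div_nonneg (by linarith) hden.le
    · rw [div_le_iff₀ hden]
      have := key_ineq w hw.le
      nlinarith
  rcases hz.lt_or_gt with h | h
  · have heq : (Real.sinh z - z) / (z * (Real.cosh z - 1))
        = (Real.sinh (-z) - (-z)) / ((-z) * (Real.cosh (-z) - 1)) := by
      rw [Real.sinh_neg, Real.cosh_neg]
      rw [show -Real.sinh z - -z = -(Real.sinh z - z) by ring,
        show -z * (Real.cosh z - 1) = -(z * (Real.cosh z - 1)) by ring, neg_div_neg_eq]
    rw [heq]
    exact main (-z) (by linarith)
  · exact main z h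

theorem V_bounds (z : ℝ) (hz : z ≠ 0) :
    1 / 2 ≤ (1 - (Real.sinh z - z) / (z * (Real.cosh z - 1))) ^ 2
        + (1 / 2) * ((Real.sinh z - z) / (z * (Real.cosh z - 1))) ^ 2 ∧
    (1 - (Real.sinh z - z) / (z * (Real.cosh z - 1))) ^ 2
        + (1 / 2) * ((Real.sinh z - z) / (z * (Real.cosh z - 1))) ^ 2 ≤ 1 := by
  obtain ⟨h0, h3⟩ := u_bounds z hz
  set u := (Real.sinh z - z) / (z * (Real.cosh z - 1)) with hu
  constructor
  · nlinarith [sq_nonneg (u - 1/3), sq_nonneg u]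
  · nlinarith [sq_nonneg u]
end

section
/- Suppose weights ψ_{-m},…,ψ_m and ψ'_1,…,ψ'_m satisfy Σ_{k=-m}^m ψ_k = 1 and Σ_{k=1}^m 2kh ψ'_k = -1, where ψ'_{-k} = -ψ'_k and ψ'_0 = 0. Then for noise-free data x_k = x₀e^{λkh} (λ ≠ 0, x₀ ≠ 0), the weak-form estimator θ = -(Σ_{k=-m}^m ψ'_k x_k)/(Σ_{k=-m}^m ψ_k x_k) satisfies θ = λ - R with R = 2x₀·Σ_{k=1}^m (ψ'_k e_λ(kh) + ψ_k e'_λ(kh)) / (x₀ + (2x₀/λ)Σ_{k=1}^m ψ_k e'_λ(kh)), provided the denominator is nonzero. -/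
lemma sum_Icc_neg_split (m : ℕ) (f : ℤ → ℝ) :
    ∑ k ∈ Finset.Icc (-(m : ℤ)) (m : ℤ), f k
      = f 0 + ∑ k ∈ Finset.Icc (1 : ℤ) (m : ℤ), (f k + f (-k)) := by
  have hsplit : Finset.Icc (-(m : ℤ)) (m : ℤ)
      = Finset.Icc (-(m : ℤ)) 0 ∪ Finset.Icc (1 : ℤ) (m : ℤ) := by
    ext k; simp only [Finset.mem_Icc, Finset.mem_union]; omega
  have hdisj : Disjoint (Finset.Icc (-(m : ℤ)) 0) (Finset.Icc (1 : ℤ) (m : ℤ)) := by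
    rw [Finset.disjoint_left]; intro a ha hb
    simp only [Finset.mem_Icc] at ha hb; omega
  rw [hsplit, Finset.sum_union hdisj]
  have hmap : (Finset.Icc (0 : ℤ) (m : ℤ)).map ⟨Neg.neg, neg_injective⟩
      = Finset.Icc (-(m : ℤ)) 0 := by
    ext k
    simp only [Finset.mem_map, Finset.mem_Icc, Function.Embedding.coeFn_mk]
    constructor
    · rintro ⟨a, ha, rfl⟩; omega
    · intro hk; exact ⟨-k, by omega, by ring⟩
  have h1 : ∑ k ∈ Finset.Icc (-(m : ℤ)) 0, f k
      = ∑ k ∈ Finset.Icc (0 : ℤ) (m : ℤ), f (-k) := by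
    rw [← hmap, Finset.sum_map]; rfl
  have h2 : Finset.Icc (0 : ℤ) (m : ℤ) = insert 0 (Finset.Icc (1 : ℤ) (m : ℤ)) := by
    ext k; simp only [Finset.mem_Icc, Finset.mem_insert]; omega
  rw [h1, h2, Finset.sum_insert (by simp)]
  simp only [neg_zero]
  rw [Finset.sum_add_distrib]
  ring

theorem weak_form_estimator_bias (x₀ lam h : ℝ) (hx₀ : x₀ ≠ 0) (hlam : lam ≠ 0) (hh : 0 < h)
    (m : ℕ) (hm : 1 ≤ m) (ψ ψ' : ℤ → ℝ)
    (hsymm : ∀ k : ℤ, ψ (-k) = ψ k)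
    (hanti : ∀ k : ℤ, ψ' (-k) = -ψ' k)
    (hψ'0 : ψ' 0 = 0)
    (hnorm : ∑ k ∈ Finset.Icc (-(m : ℤ)) (m : ℤ), ψ k = 1)
    (hnorm' : ∑ k ∈ Finset.Icc (1 : ℤ) (m : ℤ), 2 * (k : ℝ) * h * ψ' k = -1)
    (x : ℤ → ℝ) (hx : ∀ k : ℤ, x k = x₀ * Real.exp (lam * k * h))
    (hden : ∑ k ∈ Finset.Icc (-(m : ℤ)) (m : ℤ), ψ k * x k ≠ 0)
    (hRden : x₀ + (2 * x₀ / lam) * ∑ k ∈ Finset.Icc (1 : ℤ) (m : ℤ),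
        ψ k * (lam * (Real.cosh (lam * ((k : ℝ) * h)) - 1)) ≠ 0) :
    -(∑ k ∈ Finset.Icc (-(m : ℤ)) (m : ℤ), ψ' k * x k)
        / (∑ k ∈ Finset.Icc (-(m : ℤ)) (m : ℤ), ψ k * x k)
      = lam -
        (2 * x₀ * ∑ k ∈ Finset.Icc (1 : ℤ) (m : ℤ),
            (ψ' k * (Real.sinh (lam * ((k : ℝ) * h)) - lam * ((k : ℝ) * h))
              + ψ k * (lam * (Real.cosh (lam * ((k : ℝ) * h)) - 1))))
          / (x₀ + (2 * x₀ / lam) * ∑ k ∈ Finset.Icc (1 : ℤ) (m : ℤ),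
              ψ k * (lam * (Real.cosh (lam * ((k : ℝ) * h)) - 1))) := by
  set C : ℝ := ∑ k ∈ Finset.Icc (1 : ℤ) (m : ℤ),
      ψ k * (lam * (Real.cosh (lam * ((k : ℝ) * h)) - 1)) with hC
  set S : ℝ := ∑ k ∈ Finset.Icc (1 : ℤ) (m : ℤ),
      ψ' k * Real.sinh (lam * ((k : ℝ) * h)) with hS
  set E : ℝ := ∑ k ∈ Finset.Icc (1 : ℤ) (m : ℤ),
      ψ' k * (Real.sinh (lam * ((k : ℝ) * h)) - lam * ((k : ℝ) * h)) with hE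
  -- numerator sum
  have hA : ∑ k ∈ Finset.Icc (-(m : ℤ)) (m : ℤ), ψ' k * x k = 2 * x₀ * S := by
    rw [sum_Icc_neg_split, hψ'0, hS, Finset.mul_sum]
    rw [zero_mul, zero_add]
    refine Finset.sum_congr rfl fun k hk => ?_
    rw [hx k, hx (-k), hanti k, Real.sinh_eq]
    have harg : lam * ((-k : ℤ) : ℝ) * h = -(lam * ((k : ℝ) * h)) := by
      push_cast; ring
    rw [harg]
    have harg2 : lam * (k : ℝ) * h = lam * ((k : ℝ) * h) := by ring
    rw [harg2]; ring
  -- cosh pairing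
  have hB0 : ∀ g : ℤ → ℝ, (∀ j : ℤ, g (-j) = g j) →
      ∑ k ∈ Finset.Icc (-(m : ℤ)) (m : ℤ), g k * x k
        = g 0 * x₀ + ∑ k ∈ Finset.Icc (1 : ℤ) (m : ℤ),
            2 * x₀ * g k * Real.cosh (lam * ((k : ℝ) * h)) := by
    intro g hg
    rw [sum_Icc_neg_split, hx 0]
    simp only [Int.cast_zero, mul_zero, zero_mul, Real.exp_zero, mul_one]
    congr 1
    refine Finset.sum_congr rfl fun k hk => ?_
    rw [hx k, hx (-k), hg k, Real.cosh_eq]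
    have harg : lam * ((-k : ℤ) : ℝ) * h = -(lam * ((k : ℝ) * h)) := by
      push_cast; ring
    rw [harg]
    have harg2 : lam * (k : ℝ) * h = lam * ((k : ℝ) * h) := by ring
    rw [harg2]; ring
  -- ψ0 from normalization
  have hnorm2 : ψ 0 + ∑ k ∈ Finset.Icc (1 : ℤ) (m : ℤ), 2 * ψ k = 1 := by
    rw [← hnorm, sum_Icc_neg_split]
    congr 1
    refine Finset.sum_congr rfl fun k hk => ?_
    rw [hsymm k]; ring
  have hB : ∑ k ∈ Finset.Icc (-(m : ℤ)) (m : ℤ), ψ k * x k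
      = x₀ + (2 * x₀ / lam) * C := by
    rw [hB0 ψ hsymm]
    have hψ0 : ψ 0 = 1 - ∑ k ∈ Finset.Icc (1 : ℤ) (m : ℤ), 2 * ψ k := by linarith
    rw [hψ0, hC, Finset.mul_sum, sub_mul, one_mul, Finset.sum_mul]
    have key : ∑ k ∈ Finset.Icc (1 : ℤ) (m : ℤ),
        2 * x₀ / lam * (ψ k * (lam * (Real.cosh (lam * ((k : ℝ) * h)) - 1)))
          = ∑ k ∈ Finset.Icc (1 : ℤ) (m : ℤ),
        (2 * x₀ * ψ k * Real.cosh (lam * ((k : ℝ) * h)) - 2 * ψ k * x₀) := by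
      refine Finset.sum_congr rfl fun k hk => ?_
      field_simp
    rw [key, Finset.sum_sub_distrib]
    ring
  -- S in terms of E using hnorm'
  have hSE : 2 * x₀ * S = 2 * x₀ * E - lam * x₀ := by
    have : S - E = ∑ k ∈ Finset.Icc (1 : ℤ) (m : ℤ), ψ' k * (lam * ((k : ℝ) * h)) := by
      rw [hS, hE, ← Finset.sum_sub_distrib]
      refine Finset.sum_congr rfl fun k hk => ?_; ring
    have h2 : ∑ k ∈ Finset.Icc (1 : ℤ) (m : ℤ), ψ' k * (lam * ((k : ℝ) * h))
        = lam * (-(1 : ℝ) / 2) := by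
      have key : ∀ k ∈ Finset.Icc (1 : ℤ) (m : ℤ),
          ψ' k * (lam * ((k : ℝ) * h)) = lam / 2 * (2 * (k : ℝ) * h * ψ' k) :=
        fun k _ => by ring
      rw [Finset.sum_congr rfl key, ← Finset.mul_sum, hnorm']; ring
    have : S - E = lam * (-(1:ℝ)/2) := this.trans h2
    linear_combination 2 * x₀ * this
  -- final algebra
  have hsum : ∑ k ∈ Finset.Icc (1 : ℤ) (m : ℤ),
      (ψ' k * (Real.sinh (lam * ((k : ℝ) * h)) - lam * ((k : ℝ) * h))
        + ψ k * (lam * (Real.cosh (lam * ((k : ℝ) * h)) - 1))) = E + C := by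
    rw [hE, hC, Finset.sum_add_distrib]
  rw [hA, hB, hsum, hSE]
  rw [hB] at hden
  have hD : lam * x₀ + x₀ * C * 2 ≠ 0 := by
    intro h0
    apply hRden
    have : x₀ + 2 * x₀ / lam * C = (lam * x₀ + x₀ * C * 2) / lam := by
      field_simp
    rw [this, h0, zero_div]
  have hexp : x₀ + 2 * x₀ / lam * C = (lam * x₀ + x₀ * C * 2) / lam := by
    field_simp
  rw [hexp]
  simp only [div_div_eq_mul_div]
  rw [eq_sub_iff_add_eq, ← add_div, div_eq_iff hD]
  ring
end
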